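/- Let p ≥ 2. For all vectors a, b ∈ ℝ^N one has ⟨‖a‖^{p−2}a − ‖b‖^{p−2}b, a − b⟩ ≥ 2^{2−p}·‖a−b‖^p. -/

import Mathlib

open Real RealInnerProductSpace

lemma real_rpow_add_le (x y : ℝ) (hx : 0 ≤ x) (hy : 0 ≤ y) {p : ℝ} (hp : 1 ≤ p) :
    (x + y) ^ p ≤ (2 : ℝ) ^ (p - 1) * (x ^ p + y ^ p) := by
  have h := NNReal.coe_le_coe.mpr (NNReal.rpow_add_le_mul_rpow_add_rpow ⟨x, hx⟩ ⟨y, hy⟩ hp)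
  push_cast [NNReal.coe_rpow] at h
  convert h using 3 <;> rfl

lemma pLaplace_aux (N : ℕ) (p : ℝ) (hp : 2 ≤ p)
    (a b : EuclideanSpace ℝ (Fin N)) (hba : ‖b‖ ≤ ‖a‖) :
    (2 : ℝ) ^ (2 - p) * ‖a - b‖ ^ p ≤
      ⟪‖a‖ ^ (p - 2) • a - ‖b‖ ^ (p - 2) • b, a - b⟫ := by
  set x := ‖a‖ with hxdef
  set y := ‖b‖ with hydef
  set t := ‖a - b‖ with htdef
  have hx0 : (0:ℝ) ≤ x := norm_nonneg _
  have hy0 : (0:ℝ) ≤ y := norm_nonneg _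
  have ht0 : (0:ℝ) ≤ t := norm_nonneg _
  have hq : (0:ℝ) ≤ p - 2 := by linarith
  rcases eq_or_lt_of_le ht0 with ht | ht
  · -- a = b
    have hab : a = b := by
      have h0 : a - b = 0 := by simpa using norm_eq_zero.mp ht.symm
      exact sub_eq_zero.mp h0
    subst hab
    simp [← htdef, ← ht, Real.zero_rpow (show p ≠ 0 by linarith)]
  · -- main case
    have htS : t ≤ x + y := norm_sub_le a b
    have hSt : (0:ℝ) < x + y := lt_of_lt_of_le ht htS
    have hxyt : x - y ≤ t := by
      have := norm_sub_norm_le a b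
      simpa using this
    have hinner : (⟪a, b⟫ : ℝ) = (x^2 + y^2 - t^2)/2 := by
      have h := norm_sub_sq_real a b
      rw [← hxdef, ← hydef, ← htdef] at h
      linarith
    set X := x ^ (p-2) with hXdef
    set Y := y ^ (p-2) with hYdef
    have hX0 : 0 ≤ X := rpow_nonneg hx0 _
    have hY0 : 0 ≤ Y := rpow_nonneg hy0 _
    have hYX : Y ≤ X := rpow_le_rpow hy0 hba hq
    have hinner2 : (⟪b, a⟫ : ℝ) = (x^2 + y^2 - t^2)/2 := by
      rw [real_inner_comm]; exact hinner
    have hid : ⟪X • a - Y • b, a - b⟫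
        = ((X + Y) * t^2 + (X - Y) * (x^2 - y^2)) / 2 := by
      rw [inner_sub_left, real_inner_smul_left, real_inner_smul_left,
        inner_sub_right, inner_sub_right, real_inner_self_eq_norm_sq,
        real_inner_self_eq_norm_sq, hinner2, hinner, ← hxdef, ← hydef]
      ring
    -- step 1: (X - Y)(x² - y²)(x+y) ≥ (X - Y)(x - y) t²
    have hstep1 : (X - Y) * (x - y) * t^2 ≤ (X - Y) * (x^2 - y^2) * (x + y) := by
      have h1 : (0:ℝ) ≤ (X - Y) * (x - y) := mul_nonneg (by linarith) (by linarith)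
      have h2 : t^2 ≤ (x+y)^2 := by nlinarith
      nlinarith
    -- powers
    have hxp : X * x = x ^ (p - 1) := by
      rw [hXdef, show p - 1 = (p-2) + 1 by ring, rpow_add' hx0 (by norm_num; linarith), rpow_one]
    have hyp : Y * y = y ^ (p - 1) := by
      rw [hYdef, show p - 1 = (p-2) + 1 by ring, rpow_add' hy0 (by norm_num; linarith), rpow_one]
    have hSp : (x + y) ^ (p - 1) = (x + y) ^ (p - 2) * (x + y) := by
      rw [show p - 1 = (p-2) + 1 by ring, rpow_add hSt, rpow_one]
    -- mean inequality
    have hmean : (2:ℝ) ^ (2 - p) * (x + y) ^ (p - 1) ≤ x ^ (p-1) + y ^ (p-1) := by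
      have h := real_rpow_add_le x y hx0 hy0 (show (1:ℝ) ≤ p - 1 by linarith)
      have h2 : (0:ℝ) < (2:ℝ) ^ (2 - p) := rpow_pos_of_pos two_pos _
      have h3 : (2:ℝ) ^ (2 - p) * (2:ℝ) ^ (p - 1 - 1) = 1 := by
        rw [← rpow_add two_pos, show 2 - p + (p - 1 - 1) = 0 by ring, rpow_zero]
      calc (2:ℝ) ^ (2 - p) * (x + y) ^ (p - 1)
          ≤ (2:ℝ) ^ (2 - p) * ((2:ℝ) ^ (p - 1 - 1) * (x ^ (p-1) + y ^ (p-1))) :=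
            mul_le_mul_of_nonneg_left h h2.le
        _ = (x ^ (p-1) + y ^ (p-1)) := by rw [← mul_assoc, h3, one_mul]
    -- t^{p-2} ≤ (x+y)^{p-2}
    have htSq : t ^ (p-2) ≤ (x + y) ^ (p - 2) := rpow_le_rpow ht0 htS hq
    have hSq0 : (0:ℝ) ≤ (x+y) ^ (p-2) := rpow_nonneg hSt.le _
    -- t^p = t^{p-2} * t^2
    have htp : t ^ p = t ^ (p - 2) * t^2 := by
      rw [← Real.rpow_natCast t 2, ← rpow_add ht]
      norm_num
    -- assemble: show (x+y) * (2 * ⟪⟫) ≥ (x+y) * (2^{3-p} t^p)  then divide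
    have hmain : (2:ℝ) ^ (2 - p) * t ^ p * (x + y) ≤
        ⟪X • a - Y • b, a - b⟫ * (x + y) := by
      rw [hid]
      have e1 : ((X + Y) * t^2 + (X - Y) * (x^2 - y^2)) / 2 * (x + y)
          = ((X + Y) * (x + y) * t^2 + (X - Y) * (x^2 - y^2) * (x + y)) / 2 := by ring
      rw [e1]
      have e2 : (X + Y) * (x + y) * t^2 + (X - Y) * (x - y) * t^2
          = 2 * (X * x + Y * y) * t^2 := by ring
      have key : 2 * ((2:ℝ) ^ (2 - p) * t ^ p * (x + y))
          ≤ (X + Y) * (x + y) * t^2 + (X - Y) * (x^2 - y^2) * (x + y) := by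
        calc 2 * ((2:ℝ) ^ (2 - p) * t ^ p * (x + y))
            = 2 * ((2:ℝ) ^ (2 - p) * (t ^ (p-2) * (x+y))) * t^2 := by rw [htp]; ring
          _ ≤ 2 * ((2:ℝ) ^ (2 - p) * ((x+y) ^ (p-2) * (x+y))) * t^2 := by
              have hCB := mul_le_mul_of_nonneg_left
                (mul_le_mul_of_nonneg_right htSq hSt.le)
                (rpow_pos_of_pos two_pos (2 - p)).le
              exact mul_le_mul_of_nonneg_right (by linarith) (sq_nonneg t)
          _ = 2 * ((2:ℝ) ^ (2 - p) * (x+y) ^ (p-1)) * t^2 := by rw [hSp]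
          _ ≤ 2 * (x ^ (p-1) + y ^ (p-1)) * t^2 :=
              mul_le_mul_of_nonneg_right (by linarith [hmean]) (sq_nonneg t)
          _ = 2 * (X * x + Y * y) * t^2 := by rw [hxp, hyp]
          _ = (X + Y) * (x + y) * t^2 + (X - Y) * (x - y) * t^2 := by ring
          _ ≤ (X + Y) * (x + y) * t^2 + (X - Y) * (x^2 - y^2) * (x + y) := by
              linarith [hstep1]
      linarith
    have := (mul_le_mul_iff_left₀ hSt).mp hmain
    exact this

theorem pLaplace_monotone_of_two_le (N : ℕ) (p : ℝ) (hp : 2 ≤ p)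
    (a b : EuclideanSpace ℝ (Fin N)) :
    (2 : ℝ) ^ (2 - p) * ‖a - b‖ ^ p ≤
      ⟪‖a‖ ^ (p - 2) • a - ‖b‖ ^ (p - 2) • b, a - b⟫ := by
  rcases le_total ‖b‖ ‖a‖ with h | h
  · exact pLaplace_aux N p hp a b h
  · have := pLaplace_aux N p hp b a h
    rw [norm_sub_rev] at this
    calc (2 : ℝ) ^ (2 - p) * ‖a - b‖ ^ p
        ≤ ⟪‖b‖ ^ (p - 2) • b - ‖a‖ ^ (p - 2) • a, b - a⟫ := this
      _ = ⟪‖a‖ ^ (p - 2) • a - ‖b‖ ^ (p - 2) • b, a - b⟫ := by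
          rw [show ‖b‖ ^ (p - 2) • b - ‖a‖ ^ (p - 2) • a
              = -(‖a‖ ^ (p - 2) • a - ‖b‖ ^ (p - 2) • b) by abel,
            show b - a = -(a - b) by abel, inner_neg_neg]
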